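/- Let φ ∈ ℝ^d with ‖φ‖ = 1 and D a finite nonempty set with φᵀx < 0 for all x ∈ D. Let d_max = max_{x∈D}|φᵀx|. Among all vectors Δx ∈ ℝ^d with ‖Δx‖ ≤ 1 + d_max that make max_{x∈D} max{1 − φᵀ(x+Δx), 0} = 0, the vector Δx* = (1+d_max)φ has minimal norm; moreover any Δx achieving zero hinge loss on all of D must satisfy φᵀΔx ≥ 1 + d_min where d_min = min_{x∈D}|φᵀx|, hence ‖Δx‖ ≥ 1 + d_min. -/
import Mathlib


open scoped RealInnerProductSpace

theorem stmt_2 {d : ℕ} (φ : EuclideanSpace ℝ (Fin d)) (hφ : ‖φ‖ = 1)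
    (D : Finset (EuclideanSpace ℝ (Fin d))) (hD : D.Nonempty)
    (hdc : ∀ x ∈ D, ⟪φ, x⟫ < 0)
    (dmax : ℝ) (hdmax : dmax = D.sup' hD fun y => |⟪φ, y⟫|)
    (dmin : ℝ) (hdmin : dmin = D.inf' hD fun y => |⟪φ, y⟫|) :
    (∀ Δ : EuclideanSpace ℝ (Fin d),
        ‖Δ‖ ≤ 1 + dmax →
        (∀ x ∈ D, max (1 - ⟪φ, x + Δ⟫) 0 = 0) →
        ‖(1 + dmax) • φ‖ ≤ ‖Δ‖) ∧
    (∀ Δ : EuclideanSpace ℝ (Fin d),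
        (∀ x ∈ D, max (1 - ⟪φ, x + Δ⟫) 0 = 0) →
        1 + dmin ≤ ⟪φ, Δ⟫ ∧ 1 + dmin ≤ ‖Δ‖) := by
  have key : ∀ (Δ : EuclideanSpace ℝ (Fin d)),
      (∀ x ∈ D, max (1 - ⟪φ, x + Δ⟫) 0 = 0) →
      ∀ x ∈ D, 1 + |⟪φ, x⟫| ≤ ⟪φ, Δ⟫ := by
    intro Δ h x hx
    have h1 := h x hx
    have h2 : 1 - ⟪φ, x + Δ⟫ ≤ 0 := by
      rw [← h1]; exact le_max_left _ _
    rw [inner_add_right] at h2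
    have := hdc x hx
    rw [abs_of_neg this]
    linarith
  have cs : ∀ Δ : EuclideanSpace ℝ (Fin d), ⟪φ, Δ⟫ ≤ ‖Δ‖ := by
    intro Δ
    calc ⟪φ, Δ⟫ ≤ ‖φ‖ * ‖Δ‖ := real_inner_le_norm φ Δ
    _ = ‖Δ‖ := by rw [hφ, one_mul]
  constructor
  · intro Δ _ h
    obtain ⟨x₀, hx₀, hsup⟩ := Finset.exists_mem_eq_sup' hD fun y => |⟪φ, y⟫|
    have h1 : 1 + dmax ≤ ⟪φ, Δ⟫ := by
      rw [hdmax, hsup]; exact key Δ h x₀ hx₀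
    have hpos : 0 ≤ 1 + dmax := by
      rw [hdmax, hsup]; positivity
    rw [norm_smul, hφ, mul_one, Real.norm_eq_abs, abs_of_nonneg hpos]
    exact le_trans h1 (cs Δ)
  · intro Δ h
    obtain ⟨x₀, hx₀, hinf⟩ := Finset.exists_mem_eq_inf' hD fun y => |⟪φ, y⟫|
    have h1 : 1 + dmin ≤ ⟪φ, Δ⟫ := by
      rw [hdmin, hinf]; exact key Δ h x₀ hx₀
    exact ⟨h1, le_trans h1 (cs Δ)⟩
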